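/- Let C₁, ..., C_r be nontrivial finite cyclic groups. Then the derived length of the descending iterated standard wreath product C₁ ≀ (C₂ ≀ (··· ≀ C_r)···) equals r. -/

import Mathlib

/-- The automorphism action of `G` on `G → H` by right translation:
`(wrAut H G g) f x = f (x * g)`, so that the semidirect product below has
multiplication `(f₁, g₁)(f₂, g₂) = (f₁ · f₂^{g₁⁻¹}, g₁g₂)` with
`f₂^{g₁⁻¹}(x) = f₂ (x * g₁)`. -/
def wrAut (H G : Type*) [Group H] [Group G] : G →* MulAut (G → H) where
  toFun g :=
    { toFun := fun f x => f (x * g)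
      invFun := fun f x => f (x * g⁻¹)
      left_inv := fun f => funext fun x => by simp [mul_assoc]
      right_inv := fun f => funext fun x => by simp [mul_assoc]
      map_mul' := fun f₁ f₂ => rfl }
  map_one' := MulEquiv.ext fun f => funext fun x => by simp
  map_mul' := fun g₁ g₂ => MulEquiv.ext fun f => funext fun x => by simp [mul_assoc]

/-- The standard (regular) wreath product `H ≀ G`. -/
abbrev Wr (H G : Type*) [Group H] [Group G] := SemidirectProduct (G → H) G (wrAut H G)

/-- The standard wreath product of bundled groups. -/
def WrGrp (H G : GrpCat.{u}) : GrpCat.{u} := GrpCat.of (Wr H G)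

/-- Descending iterated standard wreath product `C₁ ≀ (C₂ ≀ (⋯ ≀ C_r)⋯)`,
given by a head group and the list of remaining groups. -/
def descW : GrpCat.{u} → List GrpCat.{u} → GrpCat.{u}
  | G, [] => G
  | G, H :: t => WrGrp G (descW H t)

/-- Ascending iterated standard wreath product `(⋯(C₁ ≀ C₂) ≀ ⋯) ≀ C_r`,
given by a head group and the list of remaining groups. -/
def ascW : GrpCat.{u} → List GrpCat.{u} → GrpCat.{u}
  | G, [] => G
  | G, H :: t => ascW (WrGrp G H) t

/-- Minimal number of generators of a group. -/
noncomputable def mingen (G : Type*) [Group G] : ℕ :=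
  sInf {n | ∃ S : Finset G, S.card = n ∧ Subgroup.closure (S : Set G) = ⊤}

/-- `d(G)`: minimal size of a subset whose normal closure is all of `G`. -/
noncomputable def dgen (G : Type*) [Group G] : ℕ :=
  sInf {n | ∃ S : Finset G, S.card = n ∧ Subgroup.normalClosure (S : Set G) = ⊤}

/-- Derived length: the least `n` with `derivedSeries G n = ⊥`. -/
noncomputable def dl (G : Type*) [Group G] : ℕ :=
  sInf {n | derivedSeries G n = ⊥}

namespace AuxStmt10

open SemidirectProduct

open scoped commutatorElement

universe u

variable {H G : Type*} [Group H] [Group G]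

lemma derivedSeries_succ_le (G : Type*) [Group G] (n : ℕ) :
    derivedSeries G (n + 1) ≤ derivedSeries G n := by
  have := derivedSeries_normal G n
  rw [derivedSeries_succ]
  exact Subgroup.commutator_le_left _ _

lemma derivedSeries_stab (G : Type*) [Group G] {a : ℕ}
    (h : derivedSeries G a = derivedSeries G (a + 1)) (b : ℕ) :
    derivedSeries G (a + b) = derivedSeries G a := by
  induction b with
  | zero => rfl
  | succ b ih => rw [← Nat.add_assoc, derivedSeries_succ, ih, ← derivedSeries_succ, ← h]

lemma commutator_inl (hc : ∀ a b : H, a * b = b * a) (a : Wr H G) (f : G → H) :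
    ⁅a, (inl f : Wr H G)⁆ = inl (wrAut H G a.right f * f⁻¹) := by
  have key : ∀ (u v : G → H), u * v * u⁻¹ = v := by
    intro u v; funext x
    simp only [Pi.mul_apply, Pi.inv_apply]
    rw [hc (u x) (v x)]; group
  apply SemidirectProduct.ext
  · simp only [commutatorElement_def, mul_left, inv_left, left_inl, right_inl, mul_right,
      inv_right, mul_one, map_one, map_inv, map_mul]
    simp only [MulAut.apply_inv_self, mul_inv_cancel, MulAut.one_apply, inv_one]
    rw [key]
  · simp [commutatorElement_def]

lemma lower (hc : ∀ a b : H, a * b = b * a) {h : H} (hh : h ≠ 1) :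
    ∀ m : ℕ, (∀ k, k < m → derivedSeries G (k + 1) < derivedSeries G k) →
    ∃ f : G → H, f ≠ 1 ∧ (inl f : Wr H G) ∈ derivedSeries (Wr H G) m ∧
      ∀ s₁ s₂ : G, f s₁ ≠ 1 → f s₂ ≠ 1 → s₁⁻¹ * s₂ ∈ derivedSeries G m → s₁ = s₂ := by
  classical
  intro m
  induction m with
  | zero =>
    intro _
    have e : ∀ s : G, (if s = 1 then h else 1 : H) ≠ 1 → s = 1 := by
      intro s hs
      by_contra hs1
      simp [hs1] at hs
    refine ⟨fun x => if x = 1 then h else 1, ?_, ?_, ?_⟩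
    · intro hf
      have := congrFun hf 1
      simp at this
      exact hh this
    · rw [derivedSeries_zero]; exact Subgroup.mem_top _
    · intro s₁ s₂ h₁ h₂ _
      rw [e s₁ h₁, e s₂ h₂]
  | succ m ih =>
    intro hlt
    obtain ⟨f, hf0, hfmem, hsep⟩ := ih (fun k hk => hlt k (Nat.lt_succ_of_lt hk))
    obtain ⟨g, hgm, hgm1⟩ := SetLike.exists_of_lt (hlt m (Nat.lt_succ_self m))
    have hg1 : g ≠ 1 := fun hg => hgm1 (hg ▸ Subgroup.one_mem _)
    obtain ⟨a, ha, hag⟩ : ∃ a ∈ derivedSeries (Wr H G) m, rightHom a = g := by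
      have := derivedSeries_le_map_derivedSeries
        (rightHom_surjective (N := G → H) (φ := wrAut H G)) m hgm
      simpa [Subgroup.mem_map] using this
    have hagr : a.right = g := hag
    set F : G → H := wrAut H G g f * f⁻¹ with hF
    have hFval : ∀ x : G, F x = f (x * g) * (f x)⁻¹ := fun x => rfl
    obtain ⟨s, hs⟩ : ∃ s, f s ≠ 1 := by
      by_contra hcon
      push_neg at hcon
      exact hf0 (funext fun x => hcon x)
    have hfs' : f (s * g⁻¹) = 1 := by
      by_contra hne
      have hgmem : (s * g⁻¹)⁻¹ * s ∈ derivedSeries G m := by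
        have : (s * g⁻¹)⁻¹ * s = g := by group
        rw [this]; exact hgm
      have := hsep (s * g⁻¹) s hne hs hgmem
      apply hg1
      have h2 : s * g⁻¹ = s * 1 := by rw [mul_one]; exact this
      exact inv_eq_one.mp (mul_left_cancel h2)
    refine ⟨F, ?_, ?_, ?_⟩
    · intro hFc
      have := congrFun hFc (s * g⁻¹)
      rw [hFval] at this
      simp only [inv_mul_cancel_right, hfs', inv_one, mul_one, Pi.one_apply] at this
      exact hs this
    · have hcomm : (inl F : Wr H G) = ⁅a, inl f⁆ := by
        rw [commutator_inl hc a f, hagr]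
      rw [hcomm, derivedSeries_succ]
      exact Subgroup.commutator_mem_commutator ha hfmem
    · intro s₁ s₂ h₁ h₂ hmem
      have hm : s₁⁻¹ * s₂ ∈ derivedSeries G m := derivedSeries_succ_le G m hmem
      have d : ∀ s : G, F s ≠ 1 → f (s * g) ≠ 1 ∨ f s ≠ 1 := by
        intro s hFs
        by_contra hcon
        push_neg at hcon
        apply hFs
        rw [hFval, hcon.1, hcon.2, inv_one, mul_one]
      have hginv : ∀ hgg : s₁⁻¹ * s₂ = g⁻¹, s₁ = s₂ := by
        intro hgg
        exfalso; apply hgm1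
        rw [← inv_inv g, ← hgg]
        exact Subgroup.inv_mem _ hmem
      rcases d s₁ h₁ with c₁ | c₁ <;> rcases d s₂ h₂ with c₂ | c₂
      · have := hsep (s₁ * g) (s₂ * g) c₁ c₂ (by
          have : (s₁ * g)⁻¹ * (s₂ * g) = g⁻¹ * (s₁⁻¹ * s₂) * g := by group
          rw [this]
          exact Subgroup.mul_mem _ (Subgroup.mul_mem _ (Subgroup.inv_mem _ hgm) hm) hgm)
        exact mul_right_cancel this
      · have := hsep (s₁ * g) s₂ c₁ c₂ (by
          have : (s₁ * g)⁻¹ * s₂ = g⁻¹ * (s₁⁻¹ * s₂) := by group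
          rw [this]
          exact Subgroup.mul_mem _ (Subgroup.inv_mem _ hgm) hm)
        exfalso; apply hgm1
        have : s₁⁻¹ * s₂ = g := by rw [← this]; group
        rw [← this]; exact hmem
      · have := hsep s₁ (s₂ * g) c₁ c₂ (by
          have : s₁⁻¹ * (s₂ * g) = (s₁⁻¹ * s₂) * g := by group
          rw [this]
          exact Subgroup.mul_mem _ hm hgm)
        apply hginv
        rw [this]; group
      · exact hsep s₁ s₂ c₁ c₂ hm

lemma upper (hc : ∀ a b : H, a * b = b * a) {n : ℕ} (hGn : derivedSeries G n = ⊥) :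
    derivedSeries (Wr H G) (n + 1) = ⊥ := by
  have hker : derivedSeries (Wr H G) n ≤ (inl : (G → H) →* Wr H G).range := by
    rw [range_inl_eq_ker_rightHom]
    intro x hx
    have hmem : rightHom x ∈ (derivedSeries (Wr H G) n).map rightHom := ⟨x, hx, rfl⟩
    have := map_derivedSeries_le_derivedSeries (rightHom : Wr H G →* G) n hmem
    rw [hGn, Subgroup.mem_bot] at this
    exact this
  rw [derivedSeries_succ, eq_bot_iff, Subgroup.commutator_le]
  intro g₁ hg₁ g₂ hg₂
  obtain ⟨f₁, rfl⟩ := hker hg₁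
  obtain ⟨f₂, rfl⟩ := hker hg₂
  rw [Subgroup.mem_bot, ← map_commutatorElement]
  have : ⁅f₁, f₂⁆ = 1 :=
    commutatorElement_eq_one_iff_mul_comm.mpr (funext fun x => hc (f₁ x) (f₂ x))
  rw [this, map_one]

lemma dl_eq {G : Type*} [Group G] {n : ℕ} (h1 : derivedSeries G (n + 1) = ⊥)
    (h2 : ∀ m, m ≤ n → derivedSeries G m ≠ ⊥) : dl G = n + 1 := by
  have hnon : {k | derivedSeries G k = ⊥}.Nonempty := ⟨n + 1, h1⟩
  refine le_antisymm (Nat.sInf_le h1) ?_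
  by_contra hlt
  push_neg at hlt
  exact h2 _ (Nat.lt_succ_iff.mp hlt) (Nat.sInf_mem hnon)

lemma main : ∀ (l : List GrpCat.{u}) (C : GrpCat.{u}),
    (∀ K ∈ C :: l, IsCyclic K ∧ Nontrivial K) →
    derivedSeries (descW C l) (l.length + 1) = ⊥ ∧
      ∀ m, m ≤ l.length → derivedSeries (descW C l) m ≠ ⊥ := by
  intro l
  induction l with
  | nil =>
    intro C hC
    obtain ⟨hcy, hnt⟩ := hC C (List.mem_cons_self)
    constructor
    · show derivedSeries C 1 = ⊥
      rw [derivedSeries_succ, eq_bot_iff, Subgroup.commutator_le]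
      intro g₁ _ g₂ _
      rw [Subgroup.mem_bot, commutatorElement_eq_one_iff_mul_comm]
      haveI := hcy
      letI : CommGroup C := IsCyclic.commGroup
      exact mul_comm g₁ g₂
    · intro m hm
      rw [Nat.le_zero.mp hm]
      show derivedSeries C 0 ≠ ⊥
      rw [derivedSeries_zero]
      haveI := hnt
      intro hh
      obtain ⟨x, hx⟩ := exists_ne (1 : C)
      exact hx (Subgroup.mem_bot.mp (hh ▸ Subgroup.mem_top x))
  | cons Hd t ih =>
    intro C hC
    obtain ⟨hbot, hne⟩ := ih Hd (fun K hK => hC K (List.mem_cons_of_mem _ hK))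
    obtain ⟨hcy, hnt⟩ := hC C (List.mem_cons_self)
    haveI := hnt
    obtain ⟨h0, hh0⟩ := exists_ne (1 : C)
    have hc : ∀ a b : C, a * b = b * a := by
      haveI := hcy
      letI : CommGroup C := IsCyclic.commGroup
      exact fun a b => mul_comm a b
    have hstrict : ∀ k, k ≤ t.length →
        derivedSeries (descW Hd t) (k + 1) < derivedSeries (descW Hd t) k := by
      intro k hk
      refine lt_of_le_of_ne (derivedSeries_succ_le _ _) ?_
      intro heq
      apply hne k hk
      have hs := derivedSeries_stab (descW Hd t) heq.symm (t.length + 1 - k)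
      rw [Nat.add_sub_cancel' (by omega), hbot] at hs
      exact hs.symm
    constructor
    · show derivedSeries (Wr C (descW Hd t)) (t.length + 1 + 1) = ⊥
      exact upper hc hbot
    · intro m hm
      show derivedSeries (Wr C (descW Hd t)) m ≠ ⊥
      obtain ⟨f, hf0, hmem, -⟩ := lower (G := (descW Hd t)) hc hh0 m
        (fun k hk => hstrict k (by simpa using Nat.lt_succ_iff.mp (lt_of_lt_of_le hk hm)))
      intro hB
      rw [hB, Subgroup.mem_bot] at hmem
      exact hf0 (inl_injective (by rw [hmem, map_one]))

end AuxStmt10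

/-- The derived length of a descending iterated standard wreath
product of `r` nontrivial finite cyclic groups (head `C₁` and tail list of length
`r - 1`) is exactly `r`. -/
theorem stmt10 (C₁ : GrpCat.{u}) (l : List GrpCat.{u})
    (h : ∀ H ∈ C₁ :: l, Finite H ∧ IsCyclic H ∧ Nontrivial H) :
    dl (descW C₁ l) = l.length + 1 := by
  obtain ⟨h1, h2⟩ := AuxStmt10.main l C₁ (fun K hK => ⟨(h K hK).2.1, (h K hK).2.2⟩)
  exact AuxStmt10.dl_eq h1 h2
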